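/- Let n, ℓ, p be natural numbers with p ≥ 1 and k := ℓ + p ≤ n, and let h : ℕ → ℤ satisfy h(0) = 1 and h(n+1) = 0. Suppose that for every ξ with ℓ+1 ≤ ξ ≤ k the boundary Dehn–Sommerville relation holds: Σ_{θ=0}^{n} (−1)^θ · C(n−θ, (n+1)−ξ) · h(θ) = (−1)^n · Σ_{θ=0}^{n} (−1)^θ · C(n−θ, ξ−1) · h(θ). Then Σ_{s=0}^{p−1} Σ_{θ=0}^{k} (−1)^θ · C(θ, s) · C(n−θ, (n−ℓ)−s) · h(θ) + (−1)^{n+p−1} · Σ_{s=0}^{p−1} Σ_{θ=0}^{n−ℓ} (−1)^θ · C(θ, s) · C(n−θ, k−s) · ( h(θ+1) + h(θ) ) = (−1)^n · ( C(n, ℓ) + (−1)^{p−1} · C(n, k) ). -/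
import Mathlib

open Finset

/-- Absorption identity in `ℤ`: `(b+1)·C(a,b+1) = (a−b)·C(a,b)`. -/
private lemma choose_succ_right_int (a b : ℕ) :
    ((b : ℤ) + 1) * (Nat.choose a (b + 1) : ℤ)
      = ((a : ℤ) - b) * (Nat.choose a b : ℤ) := by
  rcases le_or_gt b a with hba | hba
  · have hnat := Nat.choose_succ_right_eq a b
    have hcast : ((Nat.choose a (b + 1) : ℤ)) * ((b : ℤ) + 1)
        = (Nat.choose a b : ℤ) * ((a : ℤ) - b) := by
      have := congrArg (fun x : ℕ => (x : ℤ)) hnat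
      push_cast [Nat.cast_sub hba] at this
      linarith
    linarith
  · rw [Nat.choose_eq_zero_of_lt hba, Nat.choose_eq_zero_of_lt (by omega)]
    push_cast
    ring

private def Bb (n : ℕ) (h : ℕ → ℤ) (r : ℕ) : ℤ :=
  ∑ θ ∈ Finset.range (n + 1), (-1 : ℤ) ^ θ * (Nat.choose (n - θ) r : ℤ) * h θ

private def Pp (n : ℕ) (h : ℕ → ℤ) (s m : ℕ) : ℤ :=
  ∑ θ ∈ Finset.range (n + 1),
    (-1 : ℤ) ^ θ * (Nat.choose θ s : ℤ) * (Nat.choose (n - θ) m : ℤ) * h θ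

private def Dd (n k : ℕ) (h : ℕ → ℤ) (j : ℕ) : ℤ :=
  ∑ t ∈ Finset.range n,
    (-1 : ℤ) ^ (t + 1) * (Nat.choose t j : ℤ)
      * (Nat.choose (n - 1 - t) (k - j - 1) : ℤ) * h (t + 1)

private def Gg (n k : ℕ) (h : ℕ → ℤ) (s : ℕ) : ℤ :=
  ∑ θ ∈ Finset.range (n + 1),
    (-1 : ℤ) ^ θ * (Nat.choose θ s : ℤ) * (Nat.choose (n - θ) (k - s) : ℤ)
      * (h (θ + 1) + h θ)

private lemma Pp_zero (n : ℕ) (h : ℕ → ℤ) (m : ℕ) : Pp n h 0 m = Bb n h m := by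
  unfold Pp Bb
  refine Finset.sum_congr rfl fun θ _ => ?_
  rw [Nat.choose_zero_right]
  push_cast
  ring

/-- The three-term recurrence `(s+1)·P(s+1,m) = (n−m−s)·P(s,m) − (m+1)·P(s,m+1)`. -/
private lemma Pp_rec (n : ℕ) (h : ℕ → ℤ) (s m : ℕ) :
    ((s : ℤ) + 1) * Pp n h (s + 1) m
      = ((n : ℤ) - m - s) * Pp n h s m - ((m : ℤ) + 1) * Pp n h s (m + 1) := by
  unfold Pp
  rw [Finset.mul_sum, Finset.mul_sum, Finset.mul_sum, ← Finset.sum_sub_distrib]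
  refine Finset.sum_congr rfl fun θ hθ => ?_
  have hθn : θ ≤ n := by
    have := Finset.mem_range.mp hθ; omega
  have h1 := choose_succ_right_int θ s
  have h2 := choose_succ_right_int (n - θ) m
  have hc : ((n - θ : ℕ) : ℤ) = (n : ℤ) - θ := by omega
  rw [hc] at h2
  linear_combination ((-1 : ℤ) ^ θ * (Nat.choose (n - θ) m : ℤ) * h θ) * h1
    + ((-1 : ℤ) ^ θ * (Nat.choose θ s : ℤ) * h θ) * h2

/-- Generalized Dehn–Sommerville flip, by induction on `s` using `Pp_rec`. -/
private lemma Pp_flip (n : ℕ) (h : ℕ → ℤ) :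
    ∀ s m : ℕ, m + s ≤ n →
      (∀ r, m ≤ r → r ≤ m + s → Bb n h r = (-1 : ℤ) ^ n * Bb n h (n - r)) →
      Pp n h s m = (-1 : ℤ) ^ (n + s) * Pp n h s (n - m - s) := by
  intro s
  induction s with
  | zero =>
      intro m hm hDS
      rw [Pp_zero, Pp_zero, Nat.sub_zero, Nat.add_zero]
      exact hDS m le_rfl (by omega)
  | succ s ih =>
      intro m hm hDS
      set m' := n - m - (s + 1) with hm'
      have e1n : n - m - s = m' + 1 := by omega
      have e2n : n - (m + 1) - s = m' := by omega
      have IH1 : Pp n h s m = (-1 : ℤ) ^ (n + s) * Pp n h s (m' + 1) := by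
        have := ih m (by omega) (fun r h1 h2 => hDS r h1 (by omega))
        rwa [e1n] at this
      have IH2 : Pp n h s (m + 1) = (-1 : ℤ) ^ (n + s) * Pp n h s m' := by
        have := ih (m + 1) (by omega) (fun r h1 h2 => hDS r (by omega) (by omega))
        rwa [e2n] at this
      have rec1 := Pp_rec n h s m
      have rec2 := Pp_rec n h s m'
      have c1 : ((n : ℤ) - (m' : ℤ) - (s : ℤ)) = (m : ℤ) + 1 := by omega
      have c2 : ((m' : ℤ) + 1) = (n : ℤ) - m - s := by omega
      rw [c1, c2] at rec2
      have hs1 : ((s : ℤ) + 1) ≠ 0 := by positivity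
      apply mul_left_cancel₀ hs1
      linear_combination rec1 + (-1 : ℤ) ^ (n + s) * rec2
        + ((n : ℤ) - m - s) * IH1 - ((m : ℤ) + 1) * IH2

private lemma alt_sum_choose (t : ℕ) :
    ∀ q : ℕ, ∑ s ∈ Finset.range (q + 1), (-1 : ℤ) ^ s * (Nat.choose (t + 1) s : ℤ)
      = (-1 : ℤ) ^ q * (Nat.choose t q : ℤ) := by
  intro q
  induction q with
  | zero => simp
  | succ q ih =>
      rw [Finset.sum_range_succ, ih, Nat.choose_succ_succ t q]
      push_cast
      ring

/-- `∑_{s<p} (−1)^s P(s,l) = C(n,l) + (−1)^{p−1} D(p−1)`. -/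
private lemma Psum (n l p k : ℕ) (h : ℕ → ℤ) (hp : 1 ≤ p) (hkk : k = l + p)
    (h0 : h 0 = 1) :
    ∑ s ∈ Finset.range p, (-1 : ℤ) ^ s * Pp n h s l
      = (Nat.choose n l : ℤ) + (-1 : ℤ) ^ (p - 1) * Dd n k h (p - 1) := by
  unfold Pp Dd
  have hswap : ∑ s ∈ Finset.range p, (-1 : ℤ) ^ s *
        ∑ θ ∈ Finset.range (n + 1),
          (-1 : ℤ) ^ θ * (Nat.choose θ s : ℤ) * (Nat.choose (n - θ) l : ℤ) * h θ
      = ∑ θ ∈ Finset.range (n + 1), ∑ s ∈ Finset.range p,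
          (-1 : ℤ) ^ s *
            ((-1 : ℤ) ^ θ * (Nat.choose θ s : ℤ) * (Nat.choose (n - θ) l : ℤ) * h θ) := by
    rw [Finset.sum_comm]
    exact Finset.sum_congr rfl fun s _ => Finset.mul_sum _ _ _
  rw [hswap, Finset.sum_range_succ']
  have hzero : ∑ s ∈ Finset.range p,
      (-1 : ℤ) ^ s *
        ((-1 : ℤ) ^ 0 * (Nat.choose 0 s : ℤ) * (Nat.choose (n - 0) l : ℤ) * h 0)
      = (Nat.choose n l : ℤ) := by
    rw [Finset.sum_eq_single_of_mem 0 (Finset.mem_range.mpr hp)]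
    · simp [h0]
    · intro s _ hs
      rw [Nat.choose_eq_zero_of_lt (by omega)]
      push_cast
      ring
  rw [hzero]
  have hq : p = (p - 1) + 1 := by omega
  have hmain : ∀ t ∈ Finset.range n,
      (∑ s ∈ Finset.range p,
        (-1 : ℤ) ^ s *
          ((-1 : ℤ) ^ (t + 1) * (Nat.choose (t + 1) s : ℤ)
            * (Nat.choose (n - (t + 1)) l : ℤ) * h (t + 1)))
      = (-1 : ℤ) ^ (p - 1) *
          ((-1 : ℤ) ^ (t + 1) * (Nat.choose t (p - 1) : ℤ)
            * (Nat.choose (n - 1 - t) (k - (p - 1) - 1) : ℤ) * h (t + 1)) := by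
    intro t _
    have e1 : n - (t + 1) = n - 1 - t := by omega
    have e2 : k - (p - 1) - 1 = l := by omega
    rw [e2, ← e1]
    have halt : ∑ s ∈ Finset.range p, (-1 : ℤ) ^ s * (Nat.choose (t + 1) s : ℤ)
        = (-1 : ℤ) ^ (p - 1) * (Nat.choose t (p - 1) : ℤ) := by
      rw [hq]; exact alt_sum_choose t (p - 1)
    calc ∑ s ∈ Finset.range p,
          (-1 : ℤ) ^ s *
            ((-1 : ℤ) ^ (t + 1) * (Nat.choose (t + 1) s : ℤ)
              * (Nat.choose (n - (t + 1)) l : ℤ) * h (t + 1))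
        = (∑ s ∈ Finset.range p, (-1 : ℤ) ^ s * (Nat.choose (t + 1) s : ℤ)) *
            ((-1 : ℤ) ^ (t + 1) * (Nat.choose (n - (t + 1)) l : ℤ) * h (t + 1)) := by
          rw [Finset.sum_mul]
          exact Finset.sum_congr rfl fun s _ => by ring
      _ = (-1 : ℤ) ^ (p - 1) *
            ((-1 : ℤ) ^ (t + 1) * (Nat.choose t (p - 1) : ℤ)
              * (Nat.choose (n - (t + 1)) l : ℤ) * h (t + 1)) := by
          rw [halt]; ring
  rw [Finset.sum_congr rfl hmain, ← Finset.mul_sum]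
  ring

/-- Telescoping step: `G(j+1) = D(j) − D(j+1)`. -/
private lemma Gstep (n k : ℕ) (h : ℕ → ℤ) (hn1 : h (n + 1) = 0) (j : ℕ)
    (hj : j + 2 ≤ k) :
    Gg n k h (j + 1) = Dd n k h j - Dd n k h (j + 1) := by
  unfold Gg Dd
  have hsplit : ∀ θ : ℕ,
      (-1 : ℤ) ^ θ * (Nat.choose θ (j + 1) : ℤ) * (Nat.choose (n - θ) (k - (j + 1)) : ℤ)
          * (h (θ + 1) + h θ)
        = (-1 : ℤ) ^ θ * (Nat.choose θ (j + 1) : ℤ) * (Nat.choose (n - θ) (k - (j + 1)) : ℤ)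
            * h (θ + 1)
          + (-1 : ℤ) ^ θ * (Nat.choose θ (j + 1) : ℤ) * (Nat.choose (n - θ) (k - (j + 1)) : ℤ)
            * h θ := fun θ => by ring
  rw [Finset.sum_congr rfl fun θ _ => hsplit θ, Finset.sum_add_distrib]
  -- first sum: drop the θ = n term (h (n+1) = 0)
  rw [Finset.sum_range_succ (fun θ => (-1 : ℤ) ^ θ * (Nat.choose θ (j + 1) : ℤ)
      * (Nat.choose (n - θ) (k - (j + 1)) : ℤ) * h (θ + 1))]
  -- second sum: strip the θ = 0 term (C(0,j+1) = 0)
  rw [Finset.sum_range_succ' (fun θ => (-1 : ℤ) ^ θ * (Nat.choose θ (j + 1) : ℤ)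
      * (Nat.choose (n - θ) (k - (j + 1)) : ℤ) * h θ)]
  rw [hn1, Nat.choose_eq_zero_of_lt (show 0 < j + 1 by omega)]
  rw [← Finset.sum_sub_distrib]
  simp only [mul_zero, zero_mul, add_zero, Nat.cast_zero, Nat.cast_ofNat, pow_zero, one_mul]
  rw [← Finset.sum_add_distrib]
  refine Finset.sum_congr rfl fun t ht => ?_
  have htn : t < n := Finset.mem_range.mp ht
  obtain ⟨a, ha⟩ : ∃ a, n - t = a + 1 := ⟨n - 1 - t, by omega⟩
  have ha' : n - 1 - t = a := by omega
  obtain ⟨b, hb⟩ : ∃ b, k - (j + 1) = b + 1 := ⟨k - j - 2, by omega⟩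
  have hb1 : k - j - 1 = b + 1 := by omega
  have hb2 : k - (j + 1) - 1 = b := by omega
  rw [ha, ha', hb2, hb1, hb, Nat.choose_succ_succ a b, Nat.choose_succ_succ t j,
    show n - (t + 1) = a by omega]
  push_cast
  ring

/-- Base matching: `G(0) + D(0) = C(n,k)`. -/
private lemma G0D0 (n k : ℕ) (h : ℕ → ℤ) (h0 : h 0 = 1) (hn1 : h (n + 1) = 0)
    (hk1 : 1 ≤ k) :
    Gg n k h 0 + Dd n k h 0 = (Nat.choose n k : ℤ) := by
  unfold Gg Dd
  have hsplit : ∀ θ : ℕ,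
      (-1 : ℤ) ^ θ * (Nat.choose θ 0 : ℤ) * (Nat.choose (n - θ) (k - 0) : ℤ)
          * (h (θ + 1) + h θ)
        = (-1 : ℤ) ^ θ * (Nat.choose (n - θ) k : ℤ) * h (θ + 1)
          + (-1 : ℤ) ^ θ * (Nat.choose (n - θ) k : ℤ) * h θ := by
    intro θ
    rw [Nat.choose_zero_right, Nat.sub_zero]
    push_cast
    ring
  rw [Finset.sum_congr rfl fun θ _ => hsplit θ, Finset.sum_add_distrib]
  rw [Finset.sum_range_succ (fun θ => (-1 : ℤ) ^ θ * (Nat.choose (n - θ) k : ℤ) * h (θ + 1))]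
  rw [Finset.sum_range_succ' (fun θ => (-1 : ℤ) ^ θ * (Nat.choose (n - θ) k : ℤ) * h θ)]
  rw [hn1, mul_zero, add_zero, Nat.sub_zero, pow_zero, one_mul, h0, mul_one]
  have hfin : ∑ t ∈ Finset.range n,
        (-1 : ℤ) ^ t * (Nat.choose (n - t) k : ℤ) * h (t + 1)
      + (∑ t ∈ Finset.range n,
          (-1 : ℤ) ^ (t + 1) * (Nat.choose (n - (t + 1)) k : ℤ) * h (t + 1))
      + (∑ t ∈ Finset.range n,
          (-1 : ℤ) ^ (t + 1) * (Nat.choose t 0 : ℤ)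
            * (Nat.choose (n - 1 - t) (k - 0 - 1) : ℤ) * h (t + 1)) = 0 := by
    rw [← Finset.sum_add_distrib, ← Finset.sum_add_distrib]
    refine Finset.sum_eq_zero fun t ht => ?_
    have htn : t < n := Finset.mem_range.mp ht
    obtain ⟨a, ha⟩ : ∃ a, n - t = a + 1 := ⟨n - 1 - t, by omega⟩
    have ha' : n - 1 - t = a := by omega
    obtain ⟨b, hb⟩ : ∃ b, k = b + 1 := ⟨k - 1, by omega⟩
    have hb' : k - 0 - 1 = b := by omega
    rw [Nat.choose_zero_right, hb', ha, ha', hb, Nat.choose_succ_succ a b,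
      show n - (t + 1) = a by omega]
    push_cast
    ring
  linarith

/-- Telescoped total: `∑_{s<p} G(s) = C(n,k) − D(p−1)`. -/
private lemma Gsum (n l p k : ℕ) (h : ℕ → ℤ) (hp : 1 ≤ p) (hkk : k = l + p)
    (h0 : h 0 = 1) (hn1 : h (n + 1) = 0) :
    ∑ s ∈ Finset.range p, Gg n k h s = (Nat.choose n k : ℤ) - Dd n k h (p - 1) := by
  obtain ⟨q, rfl⟩ : ∃ q, p = q + 1 := ⟨p - 1, by omega⟩
  rw [Finset.sum_range_succ' (fun s => Gg n k h s)]
  have hstep : ∀ j ∈ Finset.range q, Gg n k h (j + 1) = Dd n k h j - Dd n k h (j + 1) :=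
    fun j hj => Gstep n k h hn1 j (by
      have := Finset.mem_range.mp hj; omega)
  rw [Finset.sum_congr rfl hstep, Finset.sum_range_sub' (fun j => Dd n k h j)]
  have := G0D0 n k h h0 hn1 (by omega)
  have hq : q + 1 - 1 = q := by omega
  rw [hq]
  linarith

theorem skeletal_count_boundary (n l p : ℕ) (hp : 1 ≤ p) (hk : l + p ≤ n) (h : ℕ → ℤ)
    (h0 : h 0 = 1) (hn1 : h (n + 1) = 0)
    (hDS : ∀ ξ : ℕ, l + 1 ≤ ξ → ξ ≤ l + p →
      ∑ θ ∈ Finset.range (n + 1),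
          (-1 : ℤ) ^ θ * (Nat.choose (n - θ) ((n + 1) - ξ) : ℤ) * h θ
        = (-1 : ℤ) ^ n *
          ∑ θ ∈ Finset.range (n + 1),
            (-1 : ℤ) ^ θ * (Nat.choose (n - θ) (ξ - 1) : ℤ) * h θ) :
    (∑ s ∈ Finset.range p, ∑ θ ∈ Finset.range (l + p + 1),
        (-1 : ℤ) ^ θ * (Nat.choose θ s : ℤ) *
          (Nat.choose (n - θ) ((n - l) - s) : ℤ) * h θ) +
      (-1 : ℤ) ^ (n + p - 1) *
        (∑ s ∈ Finset.range p, ∑ θ ∈ Finset.range ((n - l) + 1),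
          (-1 : ℤ) ^ θ * (Nat.choose θ s : ℤ) *
            (Nat.choose (n - θ) ((l + p) - s) : ℤ) * (h (θ + 1) + h θ))
      = (-1 : ℤ) ^ n *
          ((Nat.choose n l : ℤ) + (-1 : ℤ) ^ (p - 1) * (Nat.choose n (l + p) : ℤ)) := by
  -- the Dehn–Sommerville window in `B`-form
  have hB : ∀ r, n - l - (p - 1) ≤ r → r ≤ n - l →
      Bb n h r = (-1 : ℤ) ^ n * Bb n h (n - r) := by
    intro r hr1 hr2
    have hds := hDS (n + 1 - r) (by omega) (by omega)
    have e1 : (n + 1) - (n + 1 - r) = r := by omega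
    have e2 : (n + 1 - r) - 1 = n - r := by omega
    rw [e1, e2] at hds
    exact hds
  -- Step 1: extend the θ-range of the first double sum and apply the DS flip
  have hS1 : (∑ s ∈ Finset.range p, ∑ θ ∈ Finset.range (l + p + 1),
        (-1 : ℤ) ^ θ * (Nat.choose θ s : ℤ) *
          (Nat.choose (n - θ) ((n - l) - s) : ℤ) * h θ)
      = ∑ s ∈ Finset.range p, (-1 : ℤ) ^ (n + s) * Pp n h s l := by
    refine Finset.sum_congr rfl fun s hs => ?_
    have hsp : s < p := Finset.mem_range.mp hs
    have hext : ∑ θ ∈ Finset.range (l + p + 1),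
          (-1 : ℤ) ^ θ * (Nat.choose θ s : ℤ) *
            (Nat.choose (n - θ) ((n - l) - s) : ℤ) * h θ
        = Pp n h s ((n - l) - s) := by
      unfold Pp
      refine Finset.sum_subset (Finset.range_subset_range.mpr (by omega)) fun θ hθ hθ' => ?_
      have h1 : θ < n + 1 := Finset.mem_range.mp hθ
      have h2 : ¬ θ < l + p + 1 := fun hc => hθ' (Finset.mem_range.mpr hc)
      rw [Nat.choose_eq_zero_of_lt (show n - θ < (n - l) - s by omega)]
      push_cast
      ring
    rw [hext, Pp_flip n h s ((n - l) - s) (by omega)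
      (fun r hr1 hr2 => hB r (by omega) (by omega)),
      show n - ((n - l) - s) - s = l by omega]
  -- Step 2: extend the θ-range of the second double sum
  have hS2 : (∑ s ∈ Finset.range p, ∑ θ ∈ Finset.range ((n - l) + 1),
        (-1 : ℤ) ^ θ * (Nat.choose θ s : ℤ) *
          (Nat.choose (n - θ) ((l + p) - s) : ℤ) * (h (θ + 1) + h θ))
      = ∑ s ∈ Finset.range p, Gg n (l + p) h s := by
    refine Finset.sum_congr rfl fun s hs => ?_
    have hsp : s < p := Finset.mem_range.mp hs
    unfold Gg
    refine Finset.sum_subset (Finset.range_subset_range.mpr (by omega)) fun θ hθ hθ' => ?_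
    have h1 : θ < n + 1 := Finset.mem_range.mp hθ
    have h2 : ¬ θ < (n - l) + 1 := fun hc => hθ' (Finset.mem_range.mpr hc)
    rw [Nat.choose_eq_zero_of_lt (show n - θ < (l + p) - s by omega)]
    push_cast
    ring
  rw [hS1, hS2, Gsum n l p (l + p) h hp rfl h0 hn1]
  have hfactor : ∑ s ∈ Finset.range p, (-1 : ℤ) ^ (n + s) * Pp n h s l
      = (-1 : ℤ) ^ n * ∑ s ∈ Finset.range p, (-1 : ℤ) ^ s * Pp n h s l := by
    rw [Finset.mul_sum]
    exact Finset.sum_congr rfl fun s _ => by rw [pow_add]; ring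
  rw [hfactor, Psum n l p (l + p) h hp rfl h0,
    show n + p - 1 = n + (p - 1) by omega, pow_add]
  ring
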